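/- Let b1, b2, σ2, π‖k‖² > 0 with k ∈ ℕ*×ℕ* and σ1 > 0. Define Δ3(‖U‖²) = (320 b1 b2² π² ‖k‖² − 16 σ1 ‖U‖²) σ2² + (512 b1 b2³ π⁴ ‖k‖⁴ − 64 b2 π² σ1 ‖k‖² ‖U‖²) σ2 − 64 b2² π⁴ σ1 ‖k‖⁴ ‖U‖² + 256 b1 b2⁴ π⁶ ‖k‖⁶ + 64 b1 b2 σ2³. Then Δ3(0) > 0, Δ3 is a strictly decreasing affine function of ‖U‖², and there exists U* > 0 such that Δ3(‖U‖²) < 0 for all ‖U‖ > U*. -/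
import Mathlib


open Real

theorem hurwitz_determinant_sign (b1 b2 σ1 σ2 : ℝ)
    (hb1 : 0 < b1) (hb2 : 0 < b2) (hσ1 : 0 < σ1) (hσ2 : 0 < σ2)
    (k1 k2 : ℕ) (hk1 : 0 < k1) (hk2 : 0 < k2)
    (nk : ℝ) (hnk : nk = (k1 : ℝ) ^ 2 + (k2 : ℝ) ^ 2)
    (Δ3 : ℝ → ℝ)
    (hΔ3 : ∀ u : ℝ, Δ3 u =
      (320 * b1 * b2 ^ 2 * π ^ 2 * nk - 16 * σ1 * u) * σ2 ^ 2 +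
      (512 * b1 * b2 ^ 3 * π ^ 4 * nk ^ 2 - 64 * b2 * π ^ 2 * σ1 * nk * u) * σ2 -
      64 * b2 ^ 2 * π ^ 4 * σ1 * nk ^ 2 * u +
      256 * b1 * b2 ^ 4 * π ^ 6 * nk ^ 3 + 64 * b1 * b2 * σ2 ^ 3) :
    Δ3 0 > 0 ∧ StrictAnti Δ3 ∧
    (∃ c1 c0 : ℝ, c1 < 0 ∧ ∀ u, Δ3 u = c1 * u + c0) ∧
    ∃ Ustar > 0, ∀ U : ℝ, Ustar < U → Δ3 (U ^ 2) < 0 := by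
  have hπ : 0 < π := Real.pi_pos
  have hnk0 : 0 < nk := by
    rw [hnk]
    have h1 : (0:ℝ) < (k1:ℝ) := by exact_mod_cast hk1
    have h2 : (0:ℝ) < (k2:ℝ) := by exact_mod_cast hk2
    positivity
  set c1 := -(16 * σ1 * σ2 ^ 2 + 64 * b2 * π ^ 2 * σ1 * nk * σ2 +
      64 * b2 ^ 2 * π ^ 4 * σ1 * nk ^ 2) with hc1
  set c0 := 320 * b1 * b2 ^ 2 * π ^ 2 * nk * σ2 ^ 2 +
      512 * b1 * b2 ^ 3 * π ^ 4 * nk ^ 2 * σ2 +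
      256 * b1 * b2 ^ 4 * π ^ 6 * nk ^ 3 + 64 * b1 * b2 * σ2 ^ 3 with hc0
  have haff : ∀ u, Δ3 u = c1 * u + c0 := by
    intro u; rw [hΔ3 u, hc1, hc0]; ring
  have hc1neg : c1 < 0 := by
    rw [hc1]
    have : 0 < 16 * σ1 * σ2 ^ 2 + 64 * b2 * π ^ 2 * σ1 * nk * σ2 +
        64 * b2 ^ 2 * π ^ 4 * σ1 * nk ^ 2 := by positivity
    linarith
  have hc0pos : 0 < c0 := by rw [hc0]; positivity
  have h0 : Δ3 0 > 0 := by rw [haff 0]; linarith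
  refine ⟨h0, ?_, ⟨c1, c0, hc1neg, haff⟩, ?_⟩
  · intro x y hxy
    rw [haff x, haff y]
    nlinarith
  · refine ⟨Real.sqrt (c0 / (-c1)) + 1, by positivity, ?_⟩
    intro U hU
    have hs : 0 ≤ Real.sqrt (c0 / (-c1)) := Real.sqrt_nonneg _
    have hU0 : Real.sqrt (c0 / (-c1)) < U := by linarith
    have hU2 : c0 / (-c1) < U ^ 2 := by
      have hdiv : (0:ℝ) ≤ c0 / (-c1) := le_of_lt (div_pos hc0pos (by linarith))
      have := Real.sq_sqrt hdiv
      nlinarith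
    rw [haff]
    have h1 : c0 < (-c1) * U ^ 2 := by
      rw [div_lt_iff₀ (by linarith)] at hU2
      linarith [hU2]
    linarith
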